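/- The minimum eigenvalue of the Hamiltonian (I − |Φ⁺⟩⟨Φ⁺|)/2 ⊗ I_w + I_u ⊗ (I − |Φ⁺⟩⟨Φ⁺|)/2 acting on three qubits u, v, w (where the first term projects on qubits u,v and the second on qubits v,w) is exactly 1/4. In particular, no state can have qubit v simultaneously in an EPR pair with both u and w. -/

import Mathlib

open Matrix

set_option maxHeartbeats 2000000 in
/-- The minimum eigenvalue of
`((I − |Φ⁺⟩⟨Φ⁺|)/2)_{u,v} + ((I − |Φ⁺⟩⟨Φ⁺|)/2)_{v,w}`
on three qubits `u, v, w` is exactly `1/4`: every state has energy at least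
`(1/4)‖v‖²`, and some nonzero state attains this. In particular no state can have
qubit `v` simultaneously in an EPR pair with both `u` and `w`. -/
theorem epr_monogamy_min_eigenvalue
    (Φ : Fin 2 × Fin 2 → ℂ)
    (hΦ : Φ = fun p => if p.1 = p.2 then ((Real.sqrt 2 : ℝ) : ℂ)⁻¹ else 0)
    (A : Matrix (Fin 2 × Fin 2) (Fin 2 × Fin 2) ℂ)
    (hA : A = (2 : ℂ)⁻¹ • (1 - Matrix.vecMulVec Φ (star Φ)))
    (H : Matrix (Fin 2 × Fin 2 × Fin 2) (Fin 2 × Fin 2 × Fin 2) ℂ)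
    (hH : H = fun p q =>
      A (p.1, p.2.1) (q.1, q.2.1) * (if p.2.2 = q.2.2 then 1 else 0)
      + (if p.1 = q.1 then 1 else 0) * A (p.2.1, p.2.2) (q.2.1, q.2.2)) :
    (∀ v : Fin 2 × Fin 2 × Fin 2 → ℂ,
        (4 : ℝ)⁻¹ * (star v ⬝ᵥ v).re ≤ (star v ⬝ᵥ H.mulVec v).re) ∧
    (∃ v : Fin 2 × Fin 2 × Fin 2 → ℂ, v ≠ 0 ∧
        (star v ⬝ᵥ H.mulVec v).re = (4 : ℝ)⁻¹ * (star v ⬝ᵥ v).re) := by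
  -- First compute the outer product matrix explicitly.
  have hP : Matrix.vecMulVec Φ (star Φ)
      = fun p q => if p.1 = p.2 ∧ q.1 = q.2 then (2:ℂ)⁻¹ else 0 := by
    have h2 : ((Real.sqrt 2 : ℝ) : ℂ)⁻¹ * ((Real.sqrt 2 : ℝ) : ℂ)⁻¹ = (2:ℂ)⁻¹ := by
      rw [← Complex.ofReal_inv, ← Complex.ofReal_mul, ← mul_inv,
        Real.mul_self_sqrt (by norm_num)]
      norm_num
    funext p q
    simp only [vecMulVec_apply, hΦ, Pi.star_apply, apply_ite (star : ℂ → ℂ), star_zero,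
      RCLike.star_def, ← Complex.ofReal_inv, Complex.conj_ofReal, Complex.ofReal_inv]
    split_ifs with h1 h2' h3 <;> simp_all [h2]
  -- Entrywise formula for `A`.
  have hA' : A = fun p q => (if p = q then (2:ℂ)⁻¹ else 0)
      - (if p.1 = p.2 ∧ q.1 = q.2 then (4:ℂ)⁻¹ else 0) := by
    funext p q
    rw [hA]
    simp only [Matrix.smul_apply, Matrix.sub_apply, Matrix.one_apply, smul_eq_mul]
    simp only [hP]
    split_ifs <;> norm_num
  -- Explicit formula for `H`.
  have hH' : H = fun p q =>
      ((if (p.1, p.2.1) = (q.1, q.2.1) then (2:ℂ)⁻¹ else 0)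
        - (if p.1 = p.2.1 ∧ q.1 = q.2.1 then (4:ℂ)⁻¹ else 0)) * (if p.2.2 = q.2.2 then 1 else 0)
      + (if p.1 = q.1 then 1 else 0) *
        ((if (p.2.1, p.2.2) = (q.2.1, q.2.2) then (2:ℂ)⁻¹ else 0)
          - (if p.2.1 = p.2.2 ∧ q.2.1 = q.2.2 then (4:ℂ)⁻¹ else 0)) := by
    rw [hH, hA']
  clear hH hA hΦ hP hA'
  subst hH'
  constructor
  · intro v
    simp only [dotProduct, mulVec, Fintype.sum_prod_type, Fin.sum_univ_two, Pi.star_apply,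
      Prod.mk.injEq]
    norm_num
    nlinarith [sq_nonneg ((v (0,0,0)).re - (v (1,1,0)).re - (v (0,1,1)).re),
      sq_nonneg ((v (0,0,0)).im - (v (1,1,0)).im - (v (0,1,1)).im),
      sq_nonneg ((v (1,1,0)).re - (v (0,1,1)).re), sq_nonneg ((v (1,1,0)).im - (v (0,1,1)).im),
      sq_nonneg ((v (1,1,1)).re - (v (0,0,1)).re - (v (1,0,0)).re),
      sq_nonneg ((v (1,1,1)).im - (v (0,0,1)).im - (v (1,0,0)).im),
      sq_nonneg ((v (0,0,1)).re - (v (1,0,0)).re), sq_nonneg ((v (0,0,1)).im - (v (1,0,0)).im),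
      sq_nonneg (v (0,1,0)).re, sq_nonneg (v (0,1,0)).im,
      sq_nonneg (v (1,0,1)).re, sq_nonneg (v (1,0,1)).im]
  · refine ⟨fun p => if p = (0,0,0) then 2 else if p = (0,1,1) then 1
      else if p = (1,1,0) then 1 else 0, ?_, ?_⟩
    · intro h
      have := congrFun h (0,0,0)
      simp at this
    · simp only [dotProduct, mulVec, Fintype.sum_prod_type, Fin.sum_univ_two, Pi.star_apply,
        Prod.mk.injEq]
      norm_num
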